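/- The maximum cardinality of a cap in Z_8 × Z_8 is 8. -/

import Mathlib

def IsLine (k : ℕ) (L : Set (ZMod k × ZMod k)) : Prop :=
  ∃ a b t1 t2 : ZMod k, L = {p | ∃ w : ZMod k, p = (a + w * t1, b + w * t2)}

def Collin (k : ℕ) (p q r : ZMod k × ZMod k) : Prop :=
  ∃ L : Set (ZMod k × ZMod k), IsLine k L ∧ p ∈ L ∧ q ∈ L ∧ r ∈ L

def IsCap (k : ℕ) (C : Set (ZMod k × ZMod k)) : Prop :=
  ∀ p ∈ C, ∀ q ∈ C, ∀ r ∈ C, p ≠ q → p ≠ r → q ≠ r → ¬ Collin k p q r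

abbrev Pt := ZMod 8 × ZMod 8

lemma collin_iff (p q r : Pt) :
    Collin 8 p q r ↔ ∃ t1 t2 w2 w3 : ZMod 8,
      q - p = (w2 * t1, w2 * t2) ∧ r - p = (w3 * t1, w3 * t2) := by
  constructor
  · rintro ⟨L, ⟨a, b, t1, t2, rfl⟩, ⟨w1, hp⟩, ⟨w2, hq⟩, ⟨w3, hr⟩⟩
    refine ⟨t1, t2, w2 - w1, w3 - w1, ?_, ?_⟩
    · rw [hp, hq]; simp [Prod.ext_iff]; constructor <;> ring
    · rw [hp, hr]; simp [Prod.ext_iff]; constructor <;> ring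
  · rintro ⟨t1, t2, w2, w3, hq, hr⟩
    refine ⟨{x | ∃ w : ZMod 8, x = (p.1 + w * t1, p.2 + w * t2)}, ⟨p.1, p.2, t1, t2, rfl⟩,
      ⟨0, by simp⟩, ⟨w2, ?_⟩, ⟨w3, ?_⟩⟩
    · rw [Prod.ext_iff] at hq ⊢
      simp only [Prod.fst_sub, Prod.snd_sub] at hq
      constructor
      · rw [← hq.1]; ring
      · rw [← hq.2]; ring
    · rw [Prod.ext_iff] at hr ⊢
      simp only [Prod.fst_sub, Prod.snd_sub] at hr
      constructor
      · rw [← hr.1]; ring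
      · rw [← hr.2]; ring

section Tables

def cycN : Nat := 523216347635551940744172010138343691397871879754669414856636788302734439030629507289101526197801452513344994896609027667582139569335769240361213194106868631668159464480452612300364469059864404947432670946514050708012154067700998062295557592113336793137012277531531236552899396619936123950873713384485221980441265690466739646814024121329560810304592693535960300650962589853423860868117006859969188272320662457749457632055192448926517316895802078772141610107202420580973650788509992979080342766217211169921245446433350015395789774066644394879655435893181524958185328168095089909476999453850984214273188136911542127166112906325157601957543775724250538030565815995545171950602676957787938103529739786425381669115876375256713026797078437363169555382117801618575761164998752773503868513920752622137258624935975333663475834625101352610129612980717101587792851964755863169386194370468756475023708508666990829278100647432225926342390369303471388465591198094468791144745361368485038450330155931802704329885973670667293159635489546901005017714358548583661079175174473221005866519235370226041162203476797800378334040244297795033642954061970977787272117548934093561393557405300159507494771102011319091204377371585733510899114234382460266548822017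

def Ttable : Nat := 523216347635551940744172010138343691397871879754669414856636788302734439030629507289101526197801452513344994896609027667582139569335769240361213194106868631668159464480452614543654038760480174616536979467105040993176363692372036135084223818029996913692833323738582442818243643553396491178241172735538638981282742399472314691956180602180622639679218579058362609605807428048367270223809726404528163310349024474531945736887740681341912961191908144735566640684445830719328644151541085835304846943407746905150473743940220503569087032589052191853377932270038413705867771920540874104691444224660283384760610256182105907369778565417856009029069174679373996092282202511771377585297123575069257563376770336532385210121118242209604863375676483239512446223803882743363239130713933262339600234802017498082384862246273525726262816360050404857685543051648656254871895623170760102486354267960283266796024560234954576359563374930489502977545270984101726065961927101054599246410975002347313855673041738698227862142539928538335060823196330294729033236292253488834119781454480610169779140551326708858073130022270077738898019003368594362434603859123551120430349758825181294654930043914705422977374871280602274494318245394444592562235042384616194947678207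

def dN (p q : Nat) : Nat := ((q / 8 + 8 - p / 8) % 8) * 8 + ((q % 8 + 8 - p % 8) % 8)

def collB (p q r : Nat) : Bool := Nat.testBit Ttable (dN p q * 64 + dN p r)

def enc (p : Pt) : Nat := p.1.val * 8 + p.2.val

def decZ (n : Nat) : Pt := ((n / 8 : Nat), (n % 8 : Nat))

end Tables

section Bridging

set_option maxRecDepth 8000 in
lemma enc_inj : ∀ p q : Pt, enc p = enc q → p = q := by decide

lemma enc_lt : ∀ p : Pt, enc p < 64 := by decide

set_option maxRecDepth 2000 in
lemma enc_decZ : ∀ n, n < 64 → enc (decZ n) = n := by decide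

set_option maxRecDepth 20000 in
lemma dN_enc : ∀ p q : Pt, dN (enc p) (enc q) = enc (q - p) := by decide

set_option maxRecDepth 20000 in
set_option maxHeartbeats 1000000 in
lemma natCyc : ((List.range 64).all fun tc => (List.range 64).all fun uc =>
    ((List.range 8).any fun wc =>
      (uc / 8 == wc * (tc / 8) % 8) && (uc % 8 == wc * (tc % 8) % 8))
      == Nat.testBit cycN (tc * 64 + uc)) = true := by decide

set_option maxRecDepth 20000 in
set_option maxHeartbeats 2000000 in
lemma natTable : ((List.range 64).all fun uc => (List.range 64).all fun vc =>
    ((List.range 64).any fun tc => Nat.testBit cycN (tc * 64 + uc) &&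
      Nat.testBit cycN (tc * 64 + vc)) == Nat.testBit Ttable (uc * 64 + vc)) = true := by decide

lemma enc_div (u : Pt) : enc u / 8 = u.1.val ∧ enc u % 8 = u.2.val := by
  have h1 := ZMod.val_lt u.1
  have h2 := ZMod.val_lt u.2
  unfold enc
  omega

lemma val_eq_iff (a b : ZMod 8) : a = b ↔ a.val = b.val :=
  ⟨congrArg _, fun h => ZMod.val_injective 8 h⟩

lemma cyc_nat (t u : Pt) : (∃ w : ZMod 8, u = (w * t.1, w * t.2)) ↔
    ((List.range 8).any fun wc =>
      (enc u / 8 == wc * (enc t / 8) % 8) && (enc u % 8 == wc * (enc t % 8) % 8)) = true := by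
  obtain ⟨hu1, hu2⟩ := enc_div u
  obtain ⟨ht1, ht2⟩ := enc_div t
  rw [hu1, hu2, ht1, ht2]
  constructor
  · rintro ⟨w, rfl⟩
    rw [List.any_eq_true]
    refine ⟨w.val, List.mem_range.mpr (ZMod.val_lt w), ?_⟩
    simp only [Bool.and_eq_true, beq_iff_eq]
    exact ⟨ZMod.val_mul _ _, ZMod.val_mul _ _⟩
  · intro h
    rw [List.any_eq_true] at h
    obtain ⟨wc, hwc, h⟩ := h
    simp only [Bool.and_eq_true, beq_iff_eq] at h
    refine ⟨(wc : ZMod 8), ?_⟩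
    have hv : (wc : ZMod 8).val = wc := ZMod.val_cast_of_lt (List.mem_range.mp hwc)
    rw [Prod.ext_iff]
    constructor
    · rw [val_eq_iff, ZMod.val_mul, hv]; exact h.1
    · rw [val_eq_iff, ZMod.val_mul, hv]; exact h.2

lemma cycBit (t u : Pt) : (∃ w : ZMod 8, u = (w * t.1, w * t.2)) ↔
    Nat.testBit cycN (enc t * 64 + enc u) = true := by
  rw [cyc_nat]
  have h := natCyc
  rw [List.all_eq_true] at h
  have h2 := h (enc t) (List.mem_range.mpr (enc_lt t))
  rw [List.all_eq_true] at h2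
  have h3 := h2 (enc u) (List.mem_range.mpr (enc_lt u))
  rw [beq_iff_eq] at h3
  rw [h3]

lemma tableBit (u v : Pt) :
    (∃ t : Pt, Nat.testBit cycN (enc t * 64 + enc u) = true ∧
      Nat.testBit cycN (enc t * 64 + enc v) = true) ↔
    Nat.testBit Ttable (enc u * 64 + enc v) = true := by
  have h := natTable
  rw [List.all_eq_true] at h
  have h2 := h (enc u) (List.mem_range.mpr (enc_lt u))
  rw [List.all_eq_true] at h2
  have h3 := h2 (enc v) (List.mem_range.mpr (enc_lt v))
  rw [beq_iff_eq] at h3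
  rw [← h3, List.any_eq_true]
  constructor
  · rintro ⟨t, h1, h2⟩
    exact ⟨enc t, List.mem_range.mpr (enc_lt t), by rw [h1, h2]; rfl⟩
  · rintro ⟨tc, htc, hb⟩
    rw [Bool.and_eq_true] at hb
    refine ⟨decZ tc, ?_, ?_⟩ <;>
      rw [enc_decZ tc (List.mem_range.mp htc)] <;> [exact hb.1; exact hb.2]

lemma collinB (p q r : Pt) : Collin 8 p q r ↔ collB (enc p) (enc q) (enc r) = true := by
  rw [collin_iff]
  unfold collB
  rw [dN_enc p q, dN_enc p r]
  rw [← tableBit]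
  constructor
  · rintro ⟨t1, t2, w2, w3, hu, hv⟩
    exact ⟨(t1, t2), (cycBit (t1, t2) (q - p)).mp ⟨w2, hu⟩, (cycBit (t1, t2) (r - p)).mp ⟨w3, hv⟩⟩
  · rintro ⟨t, h1, h2⟩
    obtain ⟨w2, hu⟩ := (cycBit t (q - p)).mpr h1
    obtain ⟨w3, hv⟩ := (cycBit t (r - p)).mpr h2
    exact ⟨t.1, t.2, w2, w3, hu, hv⟩

end Bridging

section Affine

def aff (m11 m12 m21 m22 c1 c2 : ZMod 8) (x : Pt) : Pt :=
  (m11 * x.1 + m12 * x.2 + c1, m21 * x.1 + m22 * x.2 + c2)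

lemma isLine_aff (m11 m12 m21 m22 c1 c2 : ZMod 8) (L : Set Pt) (h : IsLine 8 L) :
    IsLine 8 (aff m11 m12 m21 m22 c1 c2 '' L) := by
  obtain ⟨a, b, t1, t2, rfl⟩ := h
  refine ⟨m11 * a + m12 * b + c1, m21 * a + m22 * b + c2,
    m11 * t1 + m12 * t2, m21 * t1 + m22 * t2, ?_⟩
  ext x
  simp only [Set.mem_image, Set.mem_setOf_eq]
  constructor
  · rintro ⟨y, ⟨w, rfl⟩, rfl⟩
    exact ⟨w, by simp only [aff, Prod.mk.injEq]; constructor <;> ring⟩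
  · rintro ⟨w, rfl⟩
    exact ⟨(a + w * t1, b + w * t2), ⟨w, rfl⟩,
      by simp only [aff, Prod.mk.injEq]; constructor <;> ring⟩

lemma collin_aff (m11 m12 m21 m22 c1 c2 : ZMod 8) (p q r : Pt) (h : Collin 8 p q r) :
    Collin 8 (aff m11 m12 m21 m22 c1 c2 p) (aff m11 m12 m21 m22 c1 c2 q)
      (aff m11 m12 m21 m22 c1 c2 r) := by
  obtain ⟨L, hL, hp, hq, hr⟩ := h
  exact ⟨_, isLine_aff m11 m12 m21 m22 c1 c2 L hL, Set.mem_image_of_mem _ hp,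
    Set.mem_image_of_mem _ hq, Set.mem_image_of_mem _ hr⟩

lemma isCap_image (C : Set Pt) (hC : IsCap 8 C) (f : Pt → Pt)
    (n11 n12 n21 n22 d1 d2 : ZMod 8)
    (hgf : ∀ x, aff n11 n12 n21 n22 d1 d2 (f x) = x) : IsCap 8 (f '' C) := by
  rintro _ ⟨p, hp, rfl⟩ _ ⟨q, hq, rfl⟩ _ ⟨r, hr, rfl⟩ hpq hpr hqr hcol
  have h2 := collin_aff n11 n12 n21 n22 d1 d2 _ _ _ hcol
  rw [hgf, hgf, hgf] at h2
  exact hC p hp q hq r hr (fun h => hpq (by rw [h])) (fun h => hpr (by rw [h]))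
    (fun h => hqr (by rw [h])) h2

structure Mat where
  a : ZMod 8
  b : ZMod 8
  c : ZMod 8
  d : ZMod 8
  ai : ZMod 8
  bi : ZMod 8
  ci : ZMod 8
  di : ZMod 8
deriving DecidableEq

def matList : List Mat := [
  ⟨0, 1, 1, 0, 0, 1, 1, 0⟩,
  ⟨1, 0, 0, 1, 1, 0, 0, 1⟩,
  ⟨1, 1, 0, 1, 1, 7, 0, 1⟩,
  ⟨0, 1, 3, 0, 0, 3, 1, 0⟩,
  ⟨1, 0, 0, 3, 1, 0, 0, 3⟩,
  ⟨1, 1, 0, 3, 1, 5, 0, 3⟩,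
  ⟨1, 2, 0, 1, 1, 6, 0, 1⟩,
  ⟨1, 2, 0, 3, 1, 2, 0, 3⟩,
  ⟨1, 3, 0, 1, 1, 5, 0, 1⟩,
  ⟨1, 3, 0, 3, 1, 7, 0, 3⟩,
  ⟨2, 1, 1, 0, 0, 1, 1, 6⟩,
  ⟨2, 1, 1, 1, 1, 7, 7, 2⟩,
  ⟨0, 1, 5, 0, 0, 5, 1, 0⟩,
  ⟨0, 1, 7, 0, 0, 7, 1, 0⟩,
  ⟨1, 0, 0, 5, 1, 0, 0, 5⟩,
  ⟨1, 0, 0, 7, 1, 0, 0, 7⟩,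
  ⟨1, 1, 0, 5, 1, 3, 0, 5⟩,
  ⟨1, 1, 0, 7, 1, 1, 0, 7⟩,
  ⟨1, 2, 0, 5, 1, 6, 0, 5⟩,
  ⟨1, 2, 0, 7, 1, 2, 0, 7⟩,
  ⟨1, 3, 0, 5, 1, 1, 0, 5⟩,
  ⟨1, 3, 0, 7, 1, 3, 0, 7⟩,
  ⟨1, 4, 0, 1, 1, 4, 0, 1⟩,
  ⟨1, 4, 0, 3, 1, 4, 0, 3⟩,
  ⟨1, 4, 0, 5, 1, 4, 0, 5⟩,
  ⟨1, 4, 0, 7, 1, 4, 0, 7⟩,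
  ⟨1, 5, 0, 1, 1, 3, 0, 1⟩,
  ⟨1, 5, 0, 3, 1, 1, 0, 3⟩,
  ⟨1, 5, 0, 5, 1, 7, 0, 5⟩,
  ⟨1, 5, 0, 7, 1, 5, 0, 7⟩,
  ⟨1, 6, 0, 1, 1, 2, 0, 1⟩,
  ⟨1, 6, 0, 3, 1, 6, 0, 3⟩,
  ⟨1, 6, 0, 5, 1, 2, 0, 5⟩,
  ⟨1, 6, 0, 7, 1, 6, 0, 7⟩,
  ⟨1, 7, 0, 1, 1, 1, 0, 1⟩,
  ⟨1, 7, 0, 3, 1, 3, 0, 3⟩,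
  ⟨1, 7, 0, 5, 1, 5, 0, 5⟩,
  ⟨1, 7, 0, 7, 1, 7, 0, 7⟩,
  ⟨2, 1, 1, 2, 6, 5, 5, 6⟩,
  ⟨2, 1, 1, 3, 7, 3, 3, 2⟩,
  ⟨2, 3, 1, 0, 0, 1, 3, 2⟩,
  ⟨2, 3, 1, 1, 7, 3, 1, 6⟩,
  ⟨2, 3, 1, 2, 2, 5, 7, 2⟩,
  ⟨2, 3, 1, 3, 1, 7, 5, 6⟩,
  ⟨4, 1, 1, 0, 0, 1, 1, 4⟩,
  ⟨4, 1, 1, 1, 3, 5, 5, 4⟩,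
  ⟨4, 1, 3, 0, 0, 3, 1, 4⟩,
  ⟨4, 1, 3, 1, 1, 7, 5, 4⟩]

lemma mat_inv : ∀ m ∈ matList,
    m.ai * m.a + m.bi * m.c = 1 ∧ m.ai * m.b + m.bi * m.d = 0 ∧
    m.ci * m.a + m.di * m.c = 0 ∧ m.ci * m.b + m.di * m.d = 1 := by decide

set_option maxRecDepth 8000 in
lemma mat_cover : ∀ dd : Pt, dd ≠ 0 → ∃ m ∈ matList,
    ((m.a * dd.1 + m.b * dd.2, m.c * dd.1 + m.d * dd.2) = ((0 : ZMod 8), (1 : ZMod 8)) ∨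
     (m.a * dd.1 + m.b * dd.2, m.c * dd.1 + m.d * dd.2) = ((0 : ZMod 8), (2 : ZMod 8)) ∨
     (m.a * dd.1 + m.b * dd.2, m.c * dd.1 + m.d * dd.2) = ((0 : ZMod 8), (4 : ZMod 8))) := by
  decide

end Affine

section Search

def search : Nat → List Nat → List Nat → Bool
  | 0, _, _ => true
  | fuel+1, cur, cands =>
    if cands.length + cur.length < 9 then true
    else
      match cands with
      | [] => true
      | c :: rest =>
        (if cur.length == 8 then false
         else search fuel (c :: cur) (rest.filter fun s => cur.all fun p => !collB p c s))
        && search fuel cur rest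

def CapL (S : List Nat) : Prop :=
  ∀ p ∈ S, ∀ q ∈ S, ∀ r ∈ S, p ≠ q → p ≠ r → q ≠ r → collB p q r = false

lemma search_complete : ∀ (fuel : Nat) (cands cur extras : List Nat),
    cands.length ≤ fuel → cur.length ≤ 8 → search fuel cur cands = true →
    List.Sublist extras cands → CapL (extras ++ cur) → (extras ++ cur).Nodup →
    extras.length + cur.length ≠ 9 := by
  intro fuel
  induction fuel with
  | zero =>
    intro cands cur extras hlen hcur _ hsub _ _
    have hc : cands = [] := List.eq_nil_of_length_eq_zero (Nat.le_zero.mp hlen)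
    subst hc
    have he : extras = [] := List.sublist_nil.mp hsub
    subst he
    simp only [List.length_nil]
    omega
  | succ fuel ih =>
    intro cands cur extras hlen hcur hs hsub hcap hnd
    by_cases hshort : cands.length + cur.length < 9
    · have := hsub.length_le; omega
    · rcases cands with _ | ⟨c, rest⟩
      · have he : extras = [] := List.sublist_nil.mp hsub
        subst he
        simp only [List.length_nil] at hshort ⊢
        omega
      · simp only [search, if_neg hshort] at hs
        rw [Bool.and_eq_true] at hs
        rcases List.sublist_cons_iff.mp hsub with h | ⟨ex', rfl, hex'⟩
        · exact ih rest cur extras (by simpa using Nat.le_of_succ_le_succ hlen) hcur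
            hs.2 h hcap hnd
        · have hnd' : (c :: (ex' ++ cur)).Nodup := hnd
          have hcnotin : c ∉ ex' ++ cur := (List.nodup_cons.mp hnd').1
          have hs0 := hs.1
          have h8 : (cur.length == 8) = false := by
            rcases h : (cur.length == 8) with _ | _
            · rfl
            · rw [h, if_pos rfl] at hs0; simp at hs0
          rw [if_neg (by simp [h8])] at hs0
          have hs1 := hs0
          have hcur8 : cur.length ≠ 8 := by simpa using h8
          have hpass : ∀ a ∈ ex', (cur.all fun p => !collB p c a) = true := by
            intro a ha
            rw [List.all_eq_true]
            intro p hp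
            have hpa : p ≠ a := by
              intro h; subst h
              exact (List.disjoint_of_nodup_append (List.nodup_cons.mp hnd').2) ha hp
            have hpc : p ≠ c := by
              intro h; subst h; exact hcnotin (List.mem_append.mpr (Or.inr hp))
            have hca : c ≠ a := by
              intro h; subst h; exact hcnotin (List.mem_append.mpr (Or.inl ha))
            have := hcap p (by simp [hp]) c (by simp) a (by simp [ha]) hpc hpa hca
            simp [this]
          have hexf : List.Sublist ex' (rest.filter fun s => cur.all fun p => !collB p c s) := by
            have h1 : ex'.filter (fun s => cur.all fun p => !collB p c s) = ex' :=
              List.filter_eq_self.mpr hpass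
            rw [← h1]
            exact hex'.filter _
          have hmem : ∀ x, x ∈ ex' ++ (c :: cur) ↔ x ∈ (c :: ex') ++ cur := by
            intro x
            simp only [List.mem_append, List.mem_cons]
            tauto
          have hcap' : CapL (ex' ++ (c :: cur)) := fun p hp q hq r hr =>
            hcap p ((hmem p).mp hp) q ((hmem q).mp hq) r ((hmem r).mp hr)
          have hnd2 : (ex' ++ (c :: cur)).Nodup := List.perm_middle.nodup_iff.mpr hnd'
          have hfl : (rest.filter fun s => cur.all fun p => !collB p c s).length ≤ fuel :=
            le_trans (List.length_filter_le _ _) (by simpa using Nat.le_of_succ_le_succ hlen)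
          have hfin := ih _ (c :: cur) ex' hfl (by simp only [List.length_cons]; omega) hs1
            hexf hcap' hnd2
          simp only [List.length_cons] at hfin ⊢
          omega

def cands0 (e : Nat) : List Nat :=
  (List.range 64).filter fun s => !(s == 0) && !(s == e) && !collB 0 e s

set_option maxRecDepth 1000000 in
set_option maxHeartbeats 16000000 in
theorem run1 : search 64 [1, 0] (cands0 1) = true := by decide

set_option maxRecDepth 1000000 in
set_option maxHeartbeats 16000000 in
theorem run2 : search 64 [2, 0] (cands0 2) = true := by decide

set_option maxRecDepth 1000000 in
set_option maxHeartbeats 16000000 in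
theorem run4 : search 64 [4, 0] (cands0 4) = true := by decide

end Search

section No9

lemma no9' (F : Finset Pt) (e : Pt) (hcap : IsCap 8 ↑F)
    (h0 : ((0 : ZMod 8), (0 : ZMod 8)) ∈ F) (he : e ∈ F)
    (hne : e ≠ ((0 : ZMod 8), (0 : ZMod 8)))
    (hrun : search 64 [enc e, 0] (cands0 (enc e)) = true) : F.card ≠ 9 := by
  intro h9
  classical
  set G : Finset Nat := F.image enc with hG
  have hGcard : G.card = 9 := by
    rw [hG, Finset.card_image_of_injective _ (fun a b h => enc_inj a b h), h9]
  have henc0 : enc ((0 : ZMod 8), (0 : ZMod 8)) = 0 := by decide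
  have hG0 : 0 ∈ G := by
    rw [hG, ← henc0]; exact Finset.mem_image_of_mem _ h0
  have hGe : enc e ∈ G := by rw [hG]; exact Finset.mem_image_of_mem _ he
  have hGcap : ∀ a ∈ G, ∀ b ∈ G, ∀ c ∈ G, a ≠ b → a ≠ c → b ≠ c → collB a b c = false := by
    intro a ha b hb c hc hab hac hbc
    rw [hG] at ha hb hc
    obtain ⟨pa, hpa, rfl⟩ := Finset.mem_image.mp ha
    obtain ⟨pb, hpb, rfl⟩ := Finset.mem_image.mp hb
    obtain ⟨pc, hpc, rfl⟩ := Finset.mem_image.mp hc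
    have h := hcap pa hpa pb hpb pc hpc (fun h => hab (by rw [h])) (fun h => hac (by rw [h]))
      (fun h => hbc (by rw [h]))
    rw [collinB] at h
    exact Bool.eq_false_iff.mpr h
  have hene0 : enc e ≠ 0 := fun h => hne (enc_inj e _ (by rw [h, henc0]))
  set ex : List Nat := (cands0 (enc e)).filter (fun s => decide (s ∈ G)) with hex
  have hsub : List.Sublist ex (cands0 (enc e)) := List.filter_sublist
  have hnodEx : ex.Nodup := (((List.nodup_range (n := 64)).filter _).filter _)
  have hmemx : ∀ s, s ∈ ex ↔ (s ∈ G ∧ s ≠ 0 ∧ s ≠ enc e) := by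
    intro s
    rw [hex, List.mem_filter]
    unfold cands0
    rw [List.mem_filter, List.mem_range]
    constructor
    · rintro ⟨⟨hlt, hb⟩, hg⟩
      rw [Bool.and_eq_true, Bool.and_eq_true] at hb
      refine ⟨by simpa using hg, by simpa using hb.1.1, by simpa using hb.1.2⟩
    · rintro ⟨hg, h0', he'⟩
      have hlt : s < 64 := by
        obtain ⟨x, _, rfl⟩ := Finset.mem_image.mp (hG ▸ hg)
        exact enc_lt x
      refine ⟨⟨hlt, ?_⟩, by simpa using hg⟩
      rw [Bool.and_eq_true, Bool.and_eq_true]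
      refine ⟨⟨by simpa using h0', by simpa using he'⟩, ?_⟩
      have hcc := hGcap 0 hG0 (enc e) hGe s hg (fun h => hene0 h.symm) (fun h => h0' h.symm)
        (fun h => he' h.symm)
      simp [hcc]
  have htf : ex.toFinset = (G.erase 0).erase (enc e) := by
    ext s
    rw [List.mem_toFinset, hmemx, Finset.mem_erase, Finset.mem_erase]
    tauto
  have hlen7 : ex.length = 7 := by
    have hh := List.toFinset_card_of_nodup hnodEx
    rw [htf, Finset.card_erase_of_mem (Finset.mem_erase.mpr ⟨hene0, hGe⟩),
      Finset.card_erase_of_mem hG0, hGcard] at hh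
    omega
  have hclen : (cands0 (enc e)).length ≤ 64 := by
    have := (List.filter_sublist (p := fun s => !(s == 0) && !(s == enc e) && !collB 0 (enc e) s)
      (l := List.range 64)).length_le
    simpa [cands0] using this
  have hcap2 : CapL (ex ++ [enc e, 0]) := by
    have hmem : ∀ x, x ∈ ex ++ [enc e, 0] → x ∈ G := by
      intro x hx
      rcases List.mem_append.mp hx with h | h
      · exact ((hmemx x).mp h).1
      · rcases List.mem_cons.mp h with rfl | h
        · exact hGe
        · rcases List.mem_cons.mp h with rfl | h
          · exact hG0
          · simp at h
    exact fun p hp q hq r hr => hGcap p (hmem p hp) q (hmem q hq) r (hmem r hr)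
  have hnd : (ex ++ [enc e, 0]).Nodup := by
    rw [List.nodup_append]
    refine ⟨hnodEx, by simp [hene0], ?_⟩
    intro a ha b hb hab
    subst hab
    have := (hmemx a).mp ha
    rcases List.mem_cons.mp hb with rfl | hb
    · exact this.2.2 rfl
    · rcases List.mem_cons.mp hb with rfl | hb
      · exact this.2.1 rfl
      · simp at hb
  exact search_complete 64 (cands0 (enc e)) [enc e, 0] ex hclen (by simp) hrun hsub hcap2 hnd
    (by simp [hlen7])

lemma no9 (F : Finset Pt) (e : Pt) (hcap : IsCap 8 ↑F)
    (h0 : ((0 : ZMod 8), (0 : ZMod 8)) ∈ F) (he : e ∈ F)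
    (hE : e = ((0 : ZMod 8), (1 : ZMod 8)) ∨ e = ((0 : ZMod 8), (2 : ZMod 8)) ∨
      e = ((0 : ZMod 8), (4 : ZMod 8))) : F.card ≠ 9 := by
  rcases hE with rfl | rfl | rfl
  · exact no9' F _ hcap h0 he (by decide)
      (by rw [show enc ((0 : ZMod 8), (1 : ZMod 8)) = 1 from by decide]; exact run1)
  · exact no9' F _ hcap h0 he (by decide)
      (by rw [show enc ((0 : ZMod 8), (2 : ZMod 8)) = 2 from by decide]; exact run2)
  · exact no9' F _ hcap h0 he (by decide)
      (by rw [show enc ((0 : ZMod 8), (4 : ZMod 8)) = 4 from by decide]; exact run4)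

end No9

section Main

lemma upper (C : Set Pt) (hC : IsCap 8 C) : C.ncard ≤ 8 := by
  by_contra hcon
  push_neg at hcon
  have hfin : C.Finite := Set.toFinite C
  have h9 : 9 ≤ hfin.toFinset.card := by
    rw [← Set.ncard_eq_toFinset_card C hfin]
    omega
  obtain ⟨F, hFsub, hF9⟩ := Finset.exists_subset_card_eq h9
  have hFsubC : ↑F ⊆ C := by
    intro x hx
    exact (Set.Finite.mem_toFinset hfin).mp (hFsub hx)
  have hFcap : IsCap 8 ↑F := fun p hp q hq r hr =>
    hC p (hFsubC hp) q (hFsubC hq) r (hFsubC hr)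
  obtain ⟨p, hp, q, hq, hpq⟩ := Finset.one_lt_card.mp (by omega : 1 < F.card)
  have hd : q - p ≠ 0 := sub_ne_zero.mpr (Ne.symm hpq)
  obtain ⟨m, hm, hcase⟩ := mat_cover (q - p) hd
  obtain ⟨i1, i2, i3, i4⟩ := mat_inv m hm
  set f : Pt → Pt := aff m.a m.b m.c m.d (-(m.a * p.1 + m.b * p.2))
    (-(m.c * p.1 + m.d * p.2)) with hf
  have hgf : ∀ x, aff m.ai m.bi m.ci m.di p.1 p.2 (f x) = x := by
    intro x
    rw [hf]
    unfold aff
    rw [Prod.ext_iff]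
    dsimp only
    constructor
    · linear_combination (x.1 - p.1) * i1 + (x.2 - p.2) * i2
    · linear_combination (x.1 - p.1) * i3 + (x.2 - p.2) * i4
  have hinj : Function.Injective f := fun a b hab => by rw [← hgf a, ← hgf b, hab]
  set F' : Finset Pt := F.image f with hF'
  have hcard' : F'.card = 9 := by
    rw [hF', Finset.card_image_of_injective _ hinj, hF9]
  have hcap' : IsCap 8 ↑F' := by
    rw [hF', Finset.coe_image]
    exact isCap_image (↑F) hFcap f m.ai m.bi m.ci m.di p.1 p.2 hgf
  have hfp : f p = ((0 : ZMod 8), (0 : ZMod 8)) := by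
    rw [hf]
    simp only [aff, Prod.mk.injEq]
    constructor <;> ring
  have hfq : f q = (m.a * (q - p).1 + m.b * (q - p).2, m.c * (q - p).1 + m.d * (q - p).2) := by
    rw [hf]
    simp only [aff, Prod.mk.injEq, Prod.fst_sub, Prod.snd_sub]
    constructor <;> ring
  have h0' : ((0 : ZMod 8), (0 : ZMod 8)) ∈ F' := by
    rw [hF', ← hfp]
    exact Finset.mem_image_of_mem f hp
  have he' : f q ∈ F' := by
    rw [hF']
    exact Finset.mem_image_of_mem f hq
  exact no9 F' (f q) hcap' h0' he' (by rw [hfq]; exact hcase) hcard'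

def F0 : Finset Pt :=
  {((0 : ZMod 8), (0 : ZMod 8)), (0, 1), (1, 0), (1, 1), (2, 3), (2, 6), (3, 2), (3, 7)}

set_option maxRecDepth 4000 in
lemma capF0 : ∀ p ∈ F0, ∀ q ∈ F0, ∀ r ∈ F0, p ≠ q → p ≠ r → q ≠ r →
    collB (enc p) (enc q) (enc r) = false := by decide

lemma isCapF0 : IsCap 8 ↑F0 := by
  intro p hp q hq r hr hpq hpr hqr hcol
  rw [collinB] at hcol
  rw [capF0 p hp q hq r hr hpq hpr hqr] at hcol
  exact Bool.false_ne_true hcol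

lemma cardF0 : (↑F0 : Set Pt).ncard = 8 := by
  rw [Set.ncard_coe_finset]
  decide

end Main

theorem stmt15 :
    IsGreatest {s | ∃ C : Set (ZMod 8 × ZMod 8), IsCap 8 C ∧ C.ncard = s} 8 := by
  constructor
  · exact ⟨↑F0, isCapF0, cardF0⟩
  · rintro s ⟨C, hC, rfl⟩
    exact upper C hC
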